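/- Let ζ(r) := q(r)·∫_r^{a₀} q(s)^{−1} ds for r ∈ (0,a₀] and ζ(0) := 0, where q(r) = 2^{(m₋+m₊)/2}(sin(r/2))^{m₋}(cos(r/2))^{m₊} and a₀ ∈ (0,π). Then ζ is continuous at 0, i.e. lim_{r→0⁺} ζ(r) = 0. -/

import Mathlib

open Real Set Filter

set_option maxHeartbeats 1000000 in
theorem stmt9 (mm mp a₀ : ℝ) (h1 : 1 ≤ mm) (h2 : mm ≤ mp) (ha : a₀ ∈ Ioo (0:ℝ) π) :
    Tendsto
      (fun r : ℝ =>
        (2 ^ ((mm + mp) / 2) * (Real.sin (r / 2)) ^ mm * (Real.cos (r / 2)) ^ mp) *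
          ∫ s in r..a₀,
            (2 ^ ((mm + mp) / 2) * (Real.sin (s / 2)) ^ mm * (Real.cos (s / 2)) ^ mp)⁻¹)
      (nhdsWithin 0 (Ioi 0)) (nhds 0) := by
  obtain ⟨ha0, haπ⟩ := ha
  have hπ := Real.pi_pos
  set M : ℝ := (mm + mp) / 2 with hM
  set c : ℝ := Real.cos (a₀ / 2) with hcdef
  have hc : 0 < c := Real.cos_pos_of_mem_Ioo ⟨by linarith, by linarith⟩
  set e : ℝ := mm - 1/2 with hedef
  have he : 0 < e := by rw [hedef]; linarith
  have h2M : (0:ℝ) < 2 ^ M := Real.rpow_pos_of_pos (by norm_num) M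
  -- constants
  set C : ℝ := c ^ (-mp) * (2 / (e * c)) with hCdef
  have hC : 0 < C := by positivity
  set D : ℝ := 2 ^ M * (2:ℝ)⁻¹ ^ M * C with hDdef
  have hD : 0 < D := by positivity
  -- basic facts on (0, a₀]
  have hsin : ∀ s : ℝ, 0 < s → s ≤ a₀ → 0 < Real.sin (s/2) := fun s hs hsa =>
    Real.sin_pos_of_pos_of_lt_pi (by linarith) (by linarith)
  have hsin1 : ∀ s : ℝ, Real.sin (s/2) ≤ 1 := fun s => Real.sin_le_one _
  have hcos : ∀ s : ℝ, 0 < s → s ≤ a₀ → c ≤ Real.cos (s/2) := fun s hs hsa =>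
    Real.cos_le_cos_of_nonneg_of_le_pi (by linarith) (by linarith) (by linarith)
  -- F and its derivative g
  set F : ℝ → ℝ := fun s => -(Real.sin (s/2) ^ (-e)) with hFdef
  set g : ℝ → ℝ := fun s => (Real.cos (s/2) * (1/2)) * e * Real.sin (s/2) ^ (-e - 1) with hgdef
  have hderiv : ∀ s : ℝ, 0 < s → s ≤ a₀ → HasDerivAt F (g s) s := by
    intro s hs hsa
    have h0 : HasDerivAt (fun s : ℝ => s/2) (1/2) s := (hasDerivAt_id s).div_const 2
    have h1 : HasDerivAt (fun s : ℝ => Real.sin (s/2)) (Real.cos (s/2) * (1/2)) s :=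
      h0.sin
    have h2 := (h1.rpow_const (p := -e) (Or.inl (hsin s hs hsa).ne'))
    have h3 := h2.fun_neg
    refine h3.congr_deriv ?_
    rw [hgdef]
    ring
  -- the integrand
  set qi : ℝ → ℝ := fun s =>
    (2 ^ M * Real.sin (s/2) ^ mm * Real.cos (s/2) ^ mp)⁻¹ with hqidef
  -- pointwise bound: qi s ≤ (2⁻¹)^M * C * g s
  have hpt : ∀ s : ℝ, 0 < s → s ≤ a₀ → qi s ≤ (2:ℝ)⁻¹ ^ M * C * g s := by
    intro s hs hsa
    have hss := hsin s hs hsa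
    have hcs : 0 < Real.cos (s/2) := lt_of_lt_of_le hc (hcos s hs hsa)
    have hqi : qi s = (2:ℝ)⁻¹ ^ M * Real.sin (s/2) ^ (-mm) * Real.cos (s/2) ^ (-mp) := by
      rw [hqidef]
      simp only [mul_inv]
      rw [← Real.rpow_neg hss.le, ← Real.rpow_neg hcs.le,
        ← Real.inv_rpow (by norm_num : (0:ℝ) ≤ 2)]
    rw [hqi]
    have e1 : Real.cos (s/2) ^ (-mp) ≤ c ^ (-mp) :=
      Real.rpow_le_rpow_of_nonpos hc (hcos s hs hsa) (by linarith)
    have e2 : Real.sin (s/2) ^ (-mm) ≤ Real.sin (s/2) ^ (-e - 1) :=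
      Real.rpow_le_rpow_of_exponent_ge hss (hsin1 s) (by rw [hedef]; linarith)
    have e3 : (2:ℝ)⁻¹ ^ M * Real.sin (s/2) ^ (-mm) * Real.cos (s/2) ^ (-mp) ≤
        (2:ℝ)⁻¹ ^ M * Real.sin (s/2) ^ (-e - 1) * (c ^ (-mp)) := by
      have p1 : (0:ℝ) < (2:ℝ)⁻¹ ^ M := Real.rpow_pos_of_pos (by norm_num) M
      have p2 : (0:ℝ) ≤ Real.sin (s/2) ^ (-mm) := (Real.rpow_pos_of_pos hss _).le
      have p3 : (0:ℝ) ≤ Real.cos (s/2) ^ (-mp) := (Real.rpow_pos_of_pos hcs _).le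
      have p4 : (0:ℝ) ≤ Real.sin (s/2) ^ (-e - 1) := (Real.rpow_pos_of_pos hss _).le
      exact mul_le_mul (mul_le_mul_of_nonneg_left e2 p1.le) e1 p3 (by positivity)
    refine e3.trans ?_
    -- now compare with (2⁻¹)^M * C * g s
    rw [hgdef, hCdef]
    have hgeq : (2:ℝ)⁻¹ ^ M * (c ^ (-mp) * (2 / (e * c))) *
        ((Real.cos (s/2) * (1/2)) * e * Real.sin (s/2) ^ (-e - 1)) =
        (2:ℝ)⁻¹ ^ M * Real.sin (s/2) ^ (-e - 1) * (c ^ (-mp)) * (Real.cos (s/2) / c) := by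
      field_simp
    rw [hgeq]
    have hcc : 1 ≤ Real.cos (s/2) / c := (one_le_div hc).mpr (hcos s hs hsa)
    have p5 : (0:ℝ) ≤ (2:ℝ)⁻¹ ^ M * Real.sin (s/2) ^ (-e - 1) * (c ^ (-mp)) := by
      have := Real.rpow_pos_of_pos hss (-e-1)
      have := Real.rpow_pos_of_pos hc (-mp)
      have : (0:ℝ) < (2:ℝ)⁻¹ ^ M := Real.rpow_pos_of_pos (by norm_num) M
      positivity
    nlinarith
  -- main bound for r ∈ (0, a₀)
  have key : ∀ r ∈ Ioo (0:ℝ) a₀,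
      0 ≤ (2 ^ M * Real.sin (r / 2) ^ mm * Real.cos (r / 2) ^ mp) * ∫ s in r..a₀, qi s ∧
      (2 ^ M * Real.sin (r / 2) ^ mm * Real.cos (r / 2) ^ mp) * (∫ s in r..a₀, qi s) ≤
        D * Real.sin (r/2) ^ (1/2 : ℝ) := by
    intro r hr
    obtain ⟨hr0, hra⟩ := hr
    have hsr := hsin r hr0 hra.le
    have hcr : 0 < Real.cos (r/2) := lt_of_lt_of_le hc (hcos r hr0 hra.le)
    have hqpos : (0:ℝ) < 2 ^ M * Real.sin (r / 2) ^ mm * Real.cos (r / 2) ^ mp := by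
      have := Real.rpow_pos_of_pos hsr mm
      have := Real.rpow_pos_of_pos hcr mp
      positivity
    -- continuity of qi and g on [r, a₀]
    have hsub : ∀ s ∈ Icc r a₀, 0 < s ∧ s ≤ a₀ := fun s hs => ⟨lt_of_lt_of_le hr0 hs.1, hs.2⟩
    have hconts : ContinuousOn (fun s : ℝ => Real.sin (s/2)) (Icc r a₀) :=
      (Real.continuous_sin.comp (continuous_id.div_const 2)).continuousOn
    have hcontc : ContinuousOn (fun s : ℝ => Real.cos (s/2)) (Icc r a₀) :=
      (Real.continuous_cos.comp (continuous_id.div_const 2)).continuousOn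
    have hcontqi : ContinuousOn qi (Icc r a₀) := by
      apply ContinuousOn.inv₀
      · exact (continuousOn_const.mul
          (hconts.rpow_const fun s hs => Or.inl (hsin s (hsub s hs).1 (hsub s hs).2).ne')).mul
          (hcontc.rpow_const fun s hs =>
            Or.inl (lt_of_lt_of_le hc (hcos s (hsub s hs).1 (hsub s hs).2)).ne')
      · intro s hs
        have := Real.rpow_pos_of_pos (hsin s (hsub s hs).1 (hsub s hs).2) mm
        have := Real.rpow_pos_of_pos (lt_of_lt_of_le hc (hcos s (hsub s hs).1 (hsub s hs).2)) mp
        positivity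
    have hcontg : ContinuousOn g (Icc r a₀) := by
      apply ContinuousOn.mul
      · exact (hcontc.mul continuousOn_const).mul continuousOn_const
      · exact hconts.rpow_const fun s hs => Or.inl (hsin s (hsub s hs).1 (hsub s hs).2).ne'
    have hintqi : IntervalIntegrable qi MeasureTheory.volume r a₀ := by
      apply hcontqi.intervalIntegrable_of_Icc hra.le
    have hintg : IntervalIntegrable g MeasureTheory.volume r a₀ :=
      hcontg.intervalIntegrable_of_Icc hra.le
    -- nonnegativity of the integral
    have hqinonneg : ∀ s ∈ Icc r a₀, 0 ≤ qi s := by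
      intro s hs
      have := Real.rpow_pos_of_pos (hsin s (hsub s hs).1 (hsub s hs).2) mm
      have := Real.rpow_pos_of_pos (lt_of_lt_of_le hc (hcos s (hsub s hs).1 (hsub s hs).2)) mp
      rw [hqidef]
      positivity
    have hInonneg : 0 ≤ ∫ s in r..a₀, qi s :=
      intervalIntegral.integral_nonneg hra.le hqinonneg
    constructor
    · exact mul_nonneg hqpos.le hInonneg
    -- integral of g
    have hintegg : ∫ s in r..a₀, g s = F a₀ - F r := by
      apply intervalIntegral.integral_eq_sub_of_hasDerivAt
      · intro s hs
        rw [uIcc_of_le hra.le] at hs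
        exact hderiv s (hsub s hs).1 (hsub s hs).2
      · exact hintg
    -- comparison of integrals
    have hcomp : (∫ s in r..a₀, qi s) ≤ ∫ s in r..a₀, (2:ℝ)⁻¹ ^ M * C * g s := by
      apply intervalIntegral.integral_mono_on hra.le hintqi
        (hintg.const_mul _)
      intro s hs
      exact hpt s (hsub s hs).1 (hsub s hs).2
    rw [intervalIntegral.integral_const_mul, hintegg] at hcomp
    have hFbound : F a₀ - F r ≤ Real.sin (r/2) ^ (-e) := by
      rw [hFdef]
      simp only [sub_neg_eq_add, neg_add_eq_sub]
      have : 0 < Real.sin (a₀/2) ^ (-e) := Real.rpow_pos_of_pos (hsin a₀ ha0 le_rfl) _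
      linarith
    have hIbound : (∫ s in r..a₀, qi s) ≤ (2:ℝ)⁻¹ ^ M * C * (Real.sin (r/2) ^ (-e)) := by
      refine hcomp.trans ?_
      have p1 : (0:ℝ) < (2:ℝ)⁻¹ ^ M := Real.rpow_pos_of_pos (by norm_num) M
      exact mul_le_mul_of_nonneg_left hFbound (by positivity)
    -- multiply
    have hqbound : 2 ^ M * Real.sin (r / 2) ^ mm * Real.cos (r / 2) ^ mp ≤
        2 ^ M * Real.sin (r / 2) ^ mm := by
      have : Real.cos (r / 2) ^ mp ≤ 1 :=
        Real.rpow_le_one hcr.le (Real.cos_le_one _) (by linarith)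
      have hAB : (0:ℝ) < 2 ^ M * Real.sin (r / 2) ^ mm :=
        mul_pos h2M (Real.rpow_pos_of_pos hsr mm)
      exact mul_le_of_le_one_right hAB.le this
    calc (2 ^ M * Real.sin (r / 2) ^ mm * Real.cos (r / 2) ^ mp) * (∫ s in r..a₀, qi s)
        ≤ (2 ^ M * Real.sin (r / 2) ^ mm * Real.cos (r / 2) ^ mp) *
          ((2:ℝ)⁻¹ ^ M * C * (Real.sin (r/2) ^ (-e))) :=
          mul_le_mul_of_nonneg_left hIbound hqpos.le
      _ ≤ (2 ^ M * Real.sin (r / 2) ^ mm) * ((2:ℝ)⁻¹ ^ M * C * (Real.sin (r/2) ^ (-e))) := by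
          have p1 : (0:ℝ) < (2:ℝ)⁻¹ ^ M := Real.rpow_pos_of_pos (by norm_num) M
          have p2 : (0:ℝ) < Real.sin (r/2) ^ (-e) := Real.rpow_pos_of_pos hsr _
          exact mul_le_mul_of_nonneg_right hqbound (by positivity)
      _ = D * (Real.sin (r/2) ^ mm * Real.sin (r/2) ^ (-e)) := by rw [hDdef]; ring
      _ = D * Real.sin (r/2) ^ (1/2 : ℝ) := by
          rw [← Real.rpow_add hsr]
          congr 1
          rw [hedef]
          ring_nf
  -- squeeze
  have hmem : Ioo (0:ℝ) a₀ ∈ nhdsWithin (0:ℝ) (Ioi 0) :=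
    Ioo_mem_nhdsGT_of_mem ⟨le_refl 0, ha0⟩
  have htend : Tendsto (fun r : ℝ => D * Real.sin (r/2) ^ (1/2 : ℝ))
      (nhdsWithin 0 (Ioi 0)) (nhds 0) := by
    have hs : Tendsto (fun r : ℝ => Real.sin (r/2)) (nhdsWithin 0 (Ioi 0)) (nhds 0) := by
      have : Continuous (fun r : ℝ => Real.sin (r/2)) :=
        Real.continuous_sin.comp (continuous_id.div_const 2)
      have := (this.tendsto 0).mono_left (nhdsWithin_le_nhds (s := Ioi (0:ℝ)))
      simpa using this
    have hrpow : Tendsto (fun x : ℝ => x ^ (1/2 : ℝ)) (nhds 0) (nhds 0) := by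
      have := (Real.continuousAt_rpow_const 0 (1/2) (Or.inr (by norm_num))).tendsto
      simpa [Real.zero_rpow (by norm_num : (1/2:ℝ) ≠ 0)] using this
    have := (hrpow.comp hs).const_mul D
    simpa using this
  refine tendsto_of_tendsto_of_tendsto_of_le_of_le' tendsto_const_nhds htend ?_ ?_
  · exact eventually_of_mem hmem fun r hr => (key r hr).1
  · exact eventually_of_mem hmem fun r hr => (key r hr).2
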